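/- Let (H, Ẋ, Λ) be a dataset with HΛH⊤ ≻ 0, suppose n_h ≥ 2, fix x ∈ ℝ^{n_x} and a nonempty set 𝒰_o ⊆ ℝ^{n_u}. For u ∈ 𝒰_o write h(u) := [x; u] ∈ ℝ^{n_h}, H_+(u) := [H h(u)], and for λ > 0 write Λ_+(λ) := diag(Λ, λ). Then there exist λ > 0 and u ∈ 𝒰_o such that μ̂(H_+(u), Λ_+(λ)) < μ̂(H, Λ) if and only if there exists u ∈ 𝒰_o such that h(u)⊤ (HΛH⊤)^{−1} h(u) > n_h / tr(Λ). -/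

import Mathlib

open Matrix

lemma poly_bound (m : ℕ) {y : ℝ} (h0 : 0 ≤ y) (h1 : y ≤ 1) :
    (1 + y) ^ m ≤ 1 + m * y + 4 ^ m * y ^ 2 := by
  induction m with
  | zero => simp; nlinarith
  | succ k ih =>
    have h4 : (1:ℝ) ≤ 4 ^ k := one_le_pow₀ (by norm_num)
    have hk : (k:ℝ) ≤ 4 ^ k := by
      calc (k:ℝ) ≤ 2 ^ k := by exact_mod_cast Nat.lt_two_pow_self.le
      _ ≤ 4 ^ k := by gcongr <;> norm_num
    calc (1 + y) ^ (k+1) = (1 + y) ^ k * (1 + y) := pow_succ _ _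
      _ ≤ (1 + k * y + 4 ^ k * y ^ 2) * (1 + y) := by nlinarith
      _ ≤ 1 + (↑(k+1)) * y + 4 ^ (k+1) * y ^ 2 := by
          push_cast
          have e1 : (k:ℝ) * y ^ 2 ≤ 4 ^ k * y ^ 2 := mul_le_mul_of_nonneg_right hk (sq_nonneg y)
          have e2 : y ^ 3 ≤ y ^ 2 := by nlinarith [sq_nonneg y]
          have e3 : (4:ℝ) ^ k * y ^ 3 ≤ 4 ^ k * y ^ 2 :=
            mul_le_mul_of_nonneg_left e2 (by positivity)
          ring_nf
          nlinarith [e1, e3]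

lemma core_iff (m : ℕ) (t s : ℝ) (ht : 0 < t) (hs : 0 ≤ s) :
    (∃ lam : ℝ, 0 < lam ∧ (t + lam) ^ m < t ^ m * (1 + lam * s)) ↔ (m:ℝ) / t < s := by
  have htm : (0:ℝ) < t ^ m := pow_pos ht m
  constructor
  · rintro ⟨lam, hlam, hlt⟩
    by_contra hcon
    push_neg at hcon
    have hber : 1 + (m:ℝ) * (lam / t) ≤ (1 + lam / t) ^ m :=
      one_add_mul_le_pow (by have := div_pos hlam ht; linarith) m
    have h2 : lam * s ≤ (m:ℝ) * (lam / t) := by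
      calc lam * s ≤ lam * ((m:ℝ)/t) := mul_le_mul_of_nonneg_left hcon hlam.le
        _ = (m:ℝ) * (lam / t) := by ring
    have hfac : (t + lam) ^ m = t ^ m * (1 + lam / t) ^ m := by
      rw [← mul_pow]; congr 1; field_simp
    have : (t + lam) ^ m < (t + lam) ^ m := by
      calc (t + lam) ^ m < t ^ m * (1 + lam * s) := hlt
        _ ≤ t ^ m * (1 + (m:ℝ) * (lam / t)) := by
            apply mul_le_mul_of_nonneg_left (by linarith) htm.le
        _ ≤ t ^ m * (1 + lam / t) ^ m := mul_le_mul_of_nonneg_left hber htm.le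
        _ = (t + lam) ^ m := hfac.symm
    exact lt_irrefl _ this
  · intro hst
    have hts : (m:ℝ) < t * s := by
      rw [div_lt_iff₀ ht] at hst; linarith [mul_comm s t]
    have h4 : (0:ℝ) < 4 ^ m := by positivity
    set y : ℝ := min 1 ((t * s - m) / (2 * 4 ^ m)) with hy
    have hy0 : 0 < y := lt_min one_pos (div_pos (by linarith) (by positivity))
    have hy1 : y ≤ 1 := min_le_left _ _
    have hy2 : y ≤ (t * s - m) / (2 * 4 ^ m) := min_le_right _ _
    refine ⟨t * y, mul_pos ht hy0, ?_⟩
    have hpb := poly_bound m hy0.le hy1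
    have h5 : 4 ^ m * y ≤ (t * s - m) / 2 := by
      have := mul_le_mul_of_nonneg_left hy2 h4.le
      calc (4:ℝ) ^ m * y ≤ 4 ^ m * ((t * s - m) / (2 * 4 ^ m)) := this
        _ = (t * s - m) / 2 := by field_simp
    have hkey : (m:ℝ) * y + 4 ^ m * y ^ 2 < (t * s) * y := by
      nlinarith [mul_le_mul_of_nonneg_right h5 hy0.le, mul_pos hy0 (by linarith : (0:ℝ) < t*s - m)]
    calc (t + t * y) ^ m = t ^ m * (1 + y) ^ m := by rw [← mul_pow]; ring_nf
      _ ≤ t ^ m * (1 + m * y + 4 ^ m * y ^ 2) := mul_le_mul_of_nonneg_left hpb htm.le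
      _ < t ^ m * (1 + (t * y) * s) := by nlinarith

lemma reduce_iff (β δ D c t lam : ℝ) (nx m : ℕ)
    (hβ : 0 < β) (hδ : 0 < δ) (hD : 0 < D) (hc : 0 < c) (ht : 0 < t) (hlam : 0 < lam)
    (hnx : 0 < nx) :
    (β * ((t + lam) * δ) ^ (((nx:ℝ) * (m:ℝ)) / 2) * (D * c) ^ (-(nx:ℝ) / 2) <
      β * (t * δ) ^ (((nx:ℝ) * (m:ℝ)) / 2) * D ^ (-(nx:ℝ) / 2)) ↔
    (t + lam) ^ m < t ^ m * c := by
  set e : ℝ := (nx:ℝ) / 2 with he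
  have he0 : 0 < e := by positivity
  set p : ℝ := ((nx:ℝ) * (m:ℝ)) / 2 with hpdef
  have hp : p = (m:ℝ) * e := by rw [hpdef, he]; ring
  have htl : 0 < t + lam := by linarith
  have h1 : β * ((t + lam) * δ) ^ p * (D * c) ^ (-(nx:ℝ) / 2)
      = (β * δ ^ p * D ^ (-(nx:ℝ) / 2)) * ((t + lam) ^ p * c ^ (-(nx:ℝ) / 2)) := by
    rw [Real.mul_rpow htl.le hδ.le, Real.mul_rpow hD.le hc.le]; ring
  have h2 : β * (t * δ) ^ p * D ^ (-(nx:ℝ) / 2)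
      = (β * δ ^ p * D ^ (-(nx:ℝ) / 2)) * t ^ p := by
    rw [Real.mul_rpow ht.le hδ.le]; ring
  rw [h1, h2, mul_lt_mul_iff_right₀ (by positivity)]
  rw [show (-(nx:ℝ) / 2) = -e by rw [he]; ring, Real.rpow_neg hc.le, ← div_eq_mul_inv,
    div_lt_iff₀ (Real.rpow_pos_of_pos hc e), hp,
    Real.rpow_mul htl.le, Real.rpow_mul ht.le, Real.rpow_natCast, Real.rpow_natCast,
    ← Real.mul_rpow (pow_nonneg ht.le m) hc.le]
  exact Real.rpow_lt_rpow_iff (by positivity) (by positivity) he0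


/-- The volume bound `μ̂(H,Λ) := β (tr(Λ)δ)^{n_x n_h/2} det(HΛHᵀ)^{−n_x/2}`, where
`n_h` is the number of rows of `H`. -/
noncomputable def muhat {m k : Type*} [Fintype m] [Fintype k] [DecidableEq m]
    (n_x : ℕ) (β δ : ℝ) (H : Matrix m k ℝ) (Λ : Matrix k k ℝ) : ℝ :=
  β * (Matrix.trace Λ * δ) ^ ((n_x * Fintype.card m : ℝ) / 2) *
    (H * Λ * Hᵀ).det ^ (-(n_x : ℝ) / 2)

/-- With `HΛHᵀ ≻ 0`, `x ∈ ℝ^{n_x}`, `𝒰_o ⊆ ℝ^{n_u}` nonempty, and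
`h(u) = [x; u]`, `H₊(u) = [H h(u)]`, `Λ₊(λ) = diag(Λ, λ)`: there exist `λ > 0` and
`u ∈ 𝒰_o` with `μ̂(H₊(u), Λ₊(λ)) < μ̂(H, Λ)` iff there exists `u ∈ 𝒰_o` with
`h(u)ᵀ (HΛHᵀ)⁻¹ h(u) > n_h / tr(Λ)`. (Rows of `H` are indexed by `Fin n_x ⊕ Fin n_u`,
so that `n_h = n_x + n_u ≥ 2`.) -/
theorem stmt2 (n_x n_u n : ℕ) (hx : 0 < n_x) (hu : 0 < n_u) (hn : 0 < n)
    (β δ : ℝ) (hβ : 0 < β) (hδ : 0 < δ)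
    (H : Matrix (Fin n_x ⊕ Fin n_u) (Fin n) ℝ)
    (l : Fin n → ℝ) (hl : ∀ i, 0 ≤ l i)
    (hpd : (H * Matrix.diagonal l * Hᵀ).PosDef)
    (x : Fin n_x → ℝ) (Uo : Set (Fin n_u → ℝ)) (hUo : Uo.Nonempty) :
    (∃ lam : ℝ, 0 < lam ∧ ∃ u ∈ Uo,
        muhat n_x β δ
          (Matrix.fromCols H (Matrix.of fun i (_ : Unit) => Sum.elim x u i))
          (Matrix.diagonal (Sum.elim l fun _ : Unit => lam)) <
        muhat n_x β δ H (Matrix.diagonal l)) ↔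
      ∃ u ∈ Uo,
        Sum.elim x u ⬝ᵥ (H * Matrix.diagonal l * Hᵀ)⁻¹.mulVec (Sum.elim x u) >
          ((n_x + n_u : ℕ) : ℝ) / Matrix.trace (Matrix.diagonal l) := by
  classical
  set A := H * Matrix.diagonal l * Hᵀ with hA
  have hdet : 0 < A.det := hpd.det_pos
  have hAu : IsUnit A.det := hdet.ne'.isUnit
  haveI : Nonempty (Fin n_x) := ⟨⟨0, hx⟩⟩
  set t := Matrix.trace (Matrix.diagonal l) with htdef
  have ht : 0 < t := by
    rw [htdef, Matrix.trace_diagonal]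
    rcases lt_or_eq_of_le (Finset.sum_nonneg fun i _ => hl i) with hpos | heq
    · exact hpos
    · exfalso
      have hl0 : ∀ i ∈ Finset.univ, l i = 0 :=
        (Finset.sum_eq_zero_iff_of_nonneg fun i _ => hl i).1 heq.symm
      have hd0 : Matrix.diagonal l = 0 := by
        ext i j
        rcases eq_or_ne i j with rfl | hne
        · simp [hl0 i (Finset.mem_univ i)]
        · simp [Matrix.diagonal_apply_ne _ hne]
      have hA0 : A = 0 := by rw [hA, hd0]; simp
      rw [hA0] at hdet
      simp [Matrix.det_zero] at hdet
  have hs : ∀ u : Fin n_u → ℝ,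
      0 ≤ Sum.elim x u ⬝ᵥ A⁻¹.mulVec (Sum.elim x u) := by
    intro u
    have h1 := (hpd.inv.posSemidef).re_dotProduct_nonneg (Sum.elim x u)
    simpa using h1
  have main : ∀ (u : Fin n_u → ℝ) (lam : ℝ), 0 < lam →
      (muhat n_x β δ
          (Matrix.fromCols H (Matrix.of fun i (_ : Unit) => Sum.elim x u i))
          (Matrix.diagonal (Sum.elim l fun _ : Unit => lam)) <
        muhat n_x β δ H (Matrix.diagonal l) ↔
        (t + lam) ^ (n_x + n_u) < t ^ (n_x + n_u) *
          (1 + lam * (Sum.elim x u ⬝ᵥ A⁻¹.mulVec (Sum.elim x u)))) := by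
    intro u lam hlam
    set h : (Fin n_x ⊕ Fin n_u) → ℝ := Sum.elim x u with hh
    have hplus :
        (Matrix.fromCols H (Matrix.of fun i (_ : Unit) => Sum.elim x u i)) *
          Matrix.diagonal (Sum.elim l fun _ : Unit => lam) *
          (Matrix.fromCols H (Matrix.of fun i (_ : Unit) => Sum.elim x u i))ᵀ
        = A + replicateCol Unit h * replicateRow Unit (lam • h) := by
      have hAij : ∀ i j, A i j = ∑ k, H i k * l k * Hᵀ k j := by
        intro i j
        rw [hA, Matrix.mul_apply]
        simp only [Matrix.mul_diagonal]
      ext i j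
      rw [Matrix.mul_apply, Matrix.add_apply, hAij]
      simp only [Matrix.mul_diagonal, Matrix.transpose_apply, Fintype.sum_sum_type,
        Matrix.fromCols_apply_inl, Matrix.fromCols_apply_inr, Matrix.replicateCol_apply,
        Matrix.replicateRow_apply, Matrix.of_apply, Sum.elim_inl, Sum.elim_inr,
        Finset.univ_unique, Finset.sum_singleton, Pi.smul_apply, smul_eq_mul]
      simp only [Matrix.mul_apply, Matrix.replicateCol_apply, Matrix.replicateRow_apply, Finset.univ_unique,
        Finset.sum_singleton, Pi.smul_apply, smul_eq_mul]
      ring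
    have hdetplus : (A + replicateCol Unit h * replicateRow Unit (lam • h)).det
        = A.det * (1 + lam * (h ⬝ᵥ A⁻¹.mulVec h)) := by
      rw [Matrix.det_add_replicateCol_mul_replicateRow hAu, Matrix.mul_assoc, ← Matrix.replicateCol_mulVec]
      congr 1
      rw [Matrix.det_unique]
      simp [Matrix.replicateRow_mul_replicateCol_apply, Matrix.add_apply, Matrix.one_apply_eq, smul_dotProduct]
    have htr : Matrix.trace (Matrix.diagonal (Sum.elim l fun _ : Unit => lam)) = t + lam := by
      rw [htdef, Matrix.trace_diagonal, Matrix.trace_diagonal]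
      simp [Fintype.sum_sum_type]
    have hmu1 : muhat n_x β δ
        (Matrix.fromCols H (Matrix.of fun i (_ : Unit) => Sum.elim x u i))
        (Matrix.diagonal (Sum.elim l fun _ : Unit => lam))
        = β * ((t + lam) * δ) ^ (((n_x : ℝ) * ((n_x + n_u : ℕ) : ℝ)) / 2) *
          (A.det * (1 + lam * (h ⬝ᵥ A⁻¹.mulVec h))) ^ (-(n_x : ℝ) / 2) := by
      rw [muhat, htr, hplus, hdetplus]
      norm_num [Fintype.card_sum, Fintype.card_fin]
    have hmu2 : muhat n_x β δ H (Matrix.diagonal l)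
        = β * (t * δ) ^ (((n_x : ℝ) * ((n_x + n_u : ℕ) : ℝ)) / 2) *
          A.det ^ (-(n_x : ℝ) / 2) := by
      rw [muhat, ← htdef, ← hA]
      norm_num [Fintype.card_sum, Fintype.card_fin]
    rw [hmu1, hmu2]
    have hc : 0 < 1 + lam * (h ⬝ᵥ A⁻¹.mulVec h) := by
      have := hs u
      rw [← hh] at this
      nlinarith
    exact reduce_iff β δ A.det _ t lam n_x (n_x + n_u) hβ hδ hdet hc ht hlam hx
  constructor
  · rintro ⟨lam, hlam, u, hu, hlt⟩
    refine ⟨u, hu, ?_⟩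
    exact (core_iff (n_x + n_u) t _ ht (hs u)).mp ⟨lam, hlam, (main u lam hlam).mp hlt⟩
  · rintro ⟨u, hu, hgt⟩
    obtain ⟨lam, hlam, hineq⟩ := (core_iff (n_x + n_u) t _ ht (hs u)).mpr hgt
    exact ⟨lam, hlam, u, hu, (main u lam hlam).mpr hineq⟩
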